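/- arXiv:2512.11640 — 5 statements merged into one kernel-verified Lean document; each statement's English description precedes it below -/
import Mathlib

section
/- Let 1 < p < ∞. Given ω ∈ B_{ℓ_p} with ω ≠ 0 and η > 0, there exists m = m(η, ω) ∈ ℕ such that for every ψ in the fiber ℳ_ω, every l ∈ ℕ, every integer k ≥ p, and every continuous k-homogeneous polynomial Q on ℓ_p with ‖Q‖ = 1 that does not depend on the first m coordinates (i.e. Q(x) = Q(x − x[m]) for all x), one has |ψ(Q)| ≤ (l^l k^k / (l+k)^{l+k})^{1/p} · (1+η)^l / ‖ω‖^l. -/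
open Metric Filter Set Topology ENNReal

noncomputable section

/-- Membership in the algebra `𝒜_u(B_X)` of holomorphic and uniformly continuous
functions on the open unit ball of `X`, each such function being identified with
its (unique) uniformly continuous extension to the closed unit ball. -/
def MemAu (X : Type*) [NormedAddCommGroup X] [NormedSpace ℂ X] (f : X → ℂ) : Prop :=
  DifferentiableOn ℂ f (ball (0 : X) 1) ∧ UniformContinuousOn f (closedBall (0 : X) 1)

/-- The spectrum `ℳ(𝒜_u(B_X))`: nonzero multiplicative linear functionals on
`𝒜_u(B_X)` (such functionals automatically have norm at most one, which is the
content of the field `bound'`). -/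
structure SpectrumAu (X : Type*) [NormedAddCommGroup X] [NormedSpace ℂ X] where
  toFun : ∀ f : X → ℂ, MemAu X f → ℂ
  ext' : ∀ f g hf hg, Set.EqOn f g (closedBall (0 : X) 1) → toFun f hf = toFun g hg
  map_add' : ∀ f g hf hg hfg, toFun (f + g) hfg = toFun f hf + toFun g hg
  map_smul' : ∀ (c : ℂ) (f : X → ℂ) (hf) (hcf), toFun (c • f) hcf = c * toFun f hf
  map_mul' : ∀ f g hf hg hfg, toFun (f * g) hfg = toFun f hf * toFun g hg
  nonzero' : ∃ f hf, toFun f hf ≠ 0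
  bound' : ∀ f hf C, (∀ x ∈ closedBall (0 : X) 1, ‖f x‖ ≤ C) → ‖toFun f hf‖ ≤ C

theorem memAu_one (X : Type*) [NormedAddCommGroup X] [NormedSpace ℂ X] :
    MemAu X (1 : X → ℂ) :=
  ⟨fun _ _ => differentiableWithinAt_const 1,
    uniformContinuous_const.mono_left inf_le_left⟩

/-- The evaluation homomorphism at a point of the closed unit ball. -/
def evalHomCB {X : Type*} [NormedAddCommGroup X] [NormedSpace ℂ X]
    (x : X) (hx : ‖x‖ ≤ 1) : SpectrumAu X where
  toFun f _ := f x
  ext' := fun _ _ _ _ h => h (mem_closedBall_zero_iff.2 hx)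
  map_add' := fun _ _ _ _ _ => rfl
  map_smul' := fun _ _ _ _ => rfl
  map_mul' := fun _ _ _ _ _ => rfl
  nonzero' := ⟨1, memAu_one X, one_ne_zero⟩
  bound' := fun _ _ _ hC => hC x (mem_closedBall_zero_iff.2 hx)

/-- The evaluation homomorphism `δ_x`; junk value for `x` outside the closed ball. -/
def evalHom {X : Type*} [NormedAddCommGroup X] [NormedSpace ℂ X] (x : X) : SpectrumAu X :=
  if hx : ‖x‖ ≤ 1 then evalHomCB x hx else evalHomCB 0 (by simp)

/-- The Gleason distance `‖φ - ψ‖` in the dual of `𝒜_u(B_X)`. -/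
def gleasonDist {X : Type*} [NormedAddCommGroup X] [NormedSpace ℂ X]
    (φ ψ : SpectrumAu X) : ℝ :=
  sSup {r : ℝ | ∃ (f : X → ℂ) (hf : MemAu X f),
    (∀ x ∈ closedBall (0 : X) 1, ‖f x‖ ≤ 1) ∧ r = ‖φ.toFun f hf - ψ.toFun f hf‖}

/-- The Gleason part `𝒢𝒫(φ)`. -/
def gleasonPart {X : Type*} [NormedAddCommGroup X] [NormedSpace ℂ X]
    (φ : SpectrumAu X) : Set (SpectrumAu X) :=
  {ψ | gleasonDist φ ψ < 2}

/-- The pseudo-hyperbolic distance `ρ(φ, ψ)`. -/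
def pseudoDist {X : Type*} [NormedAddCommGroup X] [NormedSpace ℂ X]
    (φ ψ : SpectrumAu X) : ℝ :=
  sSup {r : ℝ | ∃ (f : X → ℂ) (hf : MemAu X f),
    (∀ x ∈ closedBall (0 : X) 1, ‖f x‖ ≤ 1) ∧ ψ.toFun f hf = 0 ∧ r = ‖φ.toFun f hf‖}

/-- Membership in the fiber `ℳ_z` over a point `z` of `X`. -/
def memFiber {X : Type*} [NormedAddCommGroup X] [NormedSpace ℂ X]
    (φ : SpectrumAu X) (z : X) : Prop :=
  ∀ (x' : X →L[ℂ] ℂ) (h : MemAu X ⇑x'), φ.toFun ⇑x' h = x' z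

/-- The set of weak-star accumulation points of a family in the spectrum. -/
def wStarAccPts {X : Type*} [NormedAddCommGroup X] [NormedSpace ℂ X]
    {ι : Type*} (l : Filter ι) (Φ : ι → SpectrumAu X) : Set (SpectrumAu X) :=
  {ψ | ∀ (F : Finset (X → ℂ)) (hF : ∀ f ∈ F, MemAu X f) (ε : ℝ), 0 < ε →
    ∃ᶠ i in l, ∀ f, ∀ hf : f ∈ F,
      ‖(Φ i).toFun f (hF f hf) - ψ.toFun f (hF f hf)‖ < ε}

/-- Weak-star convergence of a net in the spectrum. -/
def WStarTendsto {X : Type*} [NormedAddCommGroup X] [NormedSpace ℂ X]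
    {ι : Type*} (l : Filter ι) (Φ : ι → SpectrumAu X) (ψ : SpectrumAu X) : Prop :=
  ∀ (f : X → ℂ) (hf : MemAu X f),
    Tendsto (fun i => (Φ i).toFun f hf) l (𝓝 (ψ.toFun f hf))

/-- Membership in the weak-star closure of the set of evaluations at points of the
open unit ball. -/
def inWStarClosureOfEvals {X : Type*} [NormedAddCommGroup X] [NormedSpace ℂ X]
    (ψ : SpectrumAu X) : Prop :=
  ∀ (F : Finset (X → ℂ)) (hF : ∀ f ∈ F, MemAu X f) (ε : ℝ), 0 < ε →
    ∃ x : X, ‖x‖ < 1 ∧ ∀ f, ∀ hf : f ∈ F,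
      ‖(evalHom x).toFun f (hF f hf) - ψ.toFun f (hF f hf)‖ < ε

/-- `φ` is a strong boundary point: for every (basic) weak-star neighborhood `U` of
`φ` there is `f ∈ 𝒜_u(B_X)` with `‖f‖ = 1 = φ(f)` and `|ψ(f)| < 1` for `ψ ∉ U`. -/
def IsStrongBoundaryPoint {X : Type*} [NormedAddCommGroup X] [NormedSpace ℂ X]
    (φ : SpectrumAu X) : Prop :=
  ∀ (F : Finset (X → ℂ)) (hF : ∀ f ∈ F, MemAu X f) (ε : ℝ), 0 < ε →
    ∃ (g : X → ℂ) (hg : MemAu X g),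
      (∀ x ∈ closedBall (0 : X) 1, ‖g x‖ ≤ 1) ∧ φ.toFun g hg = 1 ∧
      ∀ ψ : SpectrumAu X,
        (∃ f, ∃ hf : f ∈ F, ε ≤ ‖ψ.toFun f (hF f hf) - φ.toFun f (hF f hf)‖) →
        ‖ψ.toFun g hg‖ < 1

/-- The radius function `R(φ)`. -/
def radiusFn {X : Type*} [NormedAddCommGroup X] [NormedSpace ℂ X]
    (φ : SpectrumAu X) : ℝ :=
  sInf {r : ℝ | 0 < r ∧ r ≤ 1 ∧ ∀ (f : X → ℂ) (hf : MemAu X f) (C : ℝ),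
    (∀ x ∈ ball (0 : X) r, ‖f x‖ ≤ C) → ‖φ.toFun f hf‖ ≤ C}

/-- A continuous `k`-homogeneous polynomial: `P x = A(x, …, x)` for a continuous
symmetric `k`-linear form `A`. -/
def IsHomogPoly (X : Type*) [NormedAddCommGroup X] [NormedSpace ℂ X]
    (k : ℕ) (P : X → ℂ) : Prop :=
  ∃ A : ContinuousMultilinearMap ℂ (fun _ : Fin k => X) ℂ,
    (∀ (v : Fin k → X) (σ : Equiv.Perm (Fin k)), A (v ∘ σ) = A v) ∧
    ∀ x, P x = A fun _ => x

/-- The supremum norm of a polynomial over the closed unit ball. -/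
def polyNorm (X : Type*) [NormedAddCommGroup X] [NormedSpace ℂ X] (P : X → ℂ) : ℝ :=
  sSup {r : ℝ | ∃ x : X, ‖x‖ ≤ 1 ∧ r = ‖P x‖}

/-- The truncation `z[n] = (z 0, …, z (n-1), 0, 0, …)` of an element of `ℓ_p`. -/
def lpTrunc (p : ℝ≥0∞) (z : lp (fun _ : ℕ => ℂ) p) (n : ℕ) : lp (fun _ : ℕ => ℂ) p :=
  ∑ i ∈ Finset.range n, lp.single p i (z i)

/-- The canonical unit vector `e_n` of `ℓ_p`. -/
def lpUnit (p : ℝ≥0∞) (n : ℕ) : lp (fun _ : ℕ => ℂ) p := lp.single p n 1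

/-- The 4-homogeneous polynomial `Q x = Σ_{i<j} (x i * x j)^2` on `ℓ_1`. -/
def Qpoly (x : lp (fun _ : ℕ => ℂ) 1) : ℂ :=
  ∑' q : {q : ℕ × ℕ // q.1 < q.2}, (x q.1.1 * x q.1.2) ^ 2

/-- The characteristic sequence `1_M` of a set `M ⊆ ℕ`, as an element of `ℓ_∞`. -/
def indicatorSeq (M : Set ℕ) : lp (fun _ : ℕ => ℂ) ⊤ :=
  ⟨M.indicator fun _ => (1 : ℂ), memℓp_infty (by
    refine ⟨1, ?_⟩
    rintro r ⟨i, rfl⟩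
    by_cases h : i ∈ M <;> simp [h])⟩

/-- Membership in the fiber `ℳ_{z''}` over `z'' ∈ ℓ_1'' = (ℓ_∞)'`, where the dual of
`ℓ_1` is identified with `ℓ_∞` via the pairing `(y, x) ↦ Σ_i y i * x i`. -/
def memFiberL1 (φ : SpectrumAu (lp (fun _ : ℕ => ℂ) 1))
    (z'' : lp (fun _ : ℕ => ℂ) ⊤ →L[ℂ] ℂ) : Prop :=
  ∀ (y : lp (fun _ : ℕ => ℂ) ⊤)
    (h : MemAu (lp (fun _ : ℕ => ℂ) 1) fun x => ∑' i, y i * x i),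
    φ.toFun (fun x => ∑' i, y i * x i) h = z'' y



section AuxLemmas

lemma memAu_clm {X : Type*} [NormedAddCommGroup X] [NormedSpace ℂ X] (T : X →L[ℂ] ℂ) :
    MemAu X ⇑T :=
  ⟨T.differentiable.differentiableOn, T.uniformContinuous.mono_left inf_le_left⟩

lemma memAu_mul {X : Type*} [NormedAddCommGroup X] [NormedSpace ℂ X] {f g : X → ℂ}
    (hf : MemAu X f) (hg : MemAu X g) {Cf Cg : ℝ}
    (hCf : ∀ x ∈ closedBall (0 : X) 1, ‖f x‖ ≤ Cf)
    (hCg : ∀ x ∈ closedBall (0 : X) 1, ‖g x‖ ≤ Cg) :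
    MemAu X (f * g) := by
  constructor
  · exact hf.1.mul hg.1
  · set C : ℝ := max Cf 0 + max Cg 0 + 1 with hC
    have hCpos : 0 < C := by positivity
    rw [Metric.uniformContinuousOn_iff]
    intro ε hε
    obtain ⟨δ₁, hδ₁, H₁⟩ := Metric.uniformContinuousOn_iff.mp hf.2 (ε / (2 * C)) (by positivity)
    obtain ⟨δ₂, hδ₂, H₂⟩ := Metric.uniformContinuousOn_iff.mp hg.2 (ε / (2 * C)) (by positivity)
    refine ⟨min δ₁ δ₂, lt_min hδ₁ hδ₂, fun x hx y hy hxy => ?_⟩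
    have h1 := H₁ x hx y hy (hxy.trans_le (min_le_left _ _))
    have h2 := H₂ x hx y hy (hxy.trans_le (min_le_right _ _))
    have hfx : ‖f x‖ ≤ C := by
      have : ‖f x‖ ≤ max Cf 0 := le_max_of_le_left (hCf x hx)
      linarith [le_max_right Cg (0:ℝ)]
    have hgy : ‖g y‖ ≤ C := by
      have : ‖g y‖ ≤ max Cg 0 := le_max_of_le_left (hCg y hy)
      linarith [le_max_right Cf (0:ℝ)]
    have key : dist (f x * g x) (f y * g y)
        ≤ ‖f x‖ * dist (g x) (g y) + ‖g y‖ * dist (f x) (f y) := by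
      rw [dist_eq_norm, dist_eq_norm, dist_eq_norm]
      calc ‖f x * g x - f y * g y‖ = ‖f x * (g x - g y) + (f x - f y) * g y‖ := by ring_nf
        _ ≤ ‖f x * (g x - g y)‖ + ‖(f x - f y) * g y‖ := norm_add_le _ _
        _ = ‖f x‖ * ‖g x - g y‖ + ‖g y‖ * ‖f x - f y‖ := by rw [norm_mul, norm_mul]; ring
    have e1 : ‖f x‖ * dist (g x) (g y) ≤ C * (ε / (2 * C)) :=
      mul_le_mul hfx h2.le dist_nonneg hCpos.le
    have e2 : ‖g y‖ * dist (f x) (f y) < C * (ε / (2 * C)) := by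
      apply lt_of_le_of_lt (mul_le_mul_of_nonneg_right hgy dist_nonneg)
      exact mul_lt_mul_of_pos_left h1 hCpos
    have e3 : C * (ε / (2 * C)) = ε / 2 := by field_simp
    calc dist (f x * g x) (f y * g y) ≤ _ := key
      _ < C * (ε / (2 * C)) + C * (ε / (2 * C)) := by linarith
      _ = ε := by rw [e3]; ring

variable (p : ℝ≥0∞) [Fact (1 ≤ p)]

lemma pne0 : p ≠ 0 := (zero_lt_one.trans_le Fact.out).ne'

/-- The coordinate functional on `ℓ_p`. -/
def lpCoord (i : ℕ) : lp (fun _ : ℕ => ℂ) p →L[ℂ] ℂ :=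
  LinearMap.mkContinuous
    { toFun := fun x => x i
      map_add' := fun _ _ => rfl
      map_smul' := fun _ _ => rfl }
    1 (fun x => by simp only [one_mul]; exact lp.norm_apply_le_norm (pne0 p) x i)

@[simp] lemma lpCoord_apply (i : ℕ) (x : lp (fun _ : ℕ => ℂ) p) : lpCoord p i x = x i := rfl

lemma lpTrunc_apply (z : lp (fun _ : ℕ => ℂ) p) (n j : ℕ) :
    lpTrunc p z n j = if j < n then z j else 0 := by
  have h0 : lpTrunc p z n j = ∑ i ∈ Finset.range n, (lp.single p i (z i) : ∀ _ : ℕ, ℂ) j := by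
    rw [lpTrunc, lp.coeFn_sum, Finset.sum_apply]
  rw [h0]
  by_cases h : j < n
  · rw [Finset.sum_eq_single j]
    · simp [lp.single_apply, h]
    · intro i _ hij; exact lp.single_apply_ne p i _ (Ne.symm hij)
    · intro hj; exact absurd (Finset.mem_range.2 h) hj
  · rw [if_neg h, Finset.sum_eq_zero]
    intro i hi
    exact lp.single_apply_ne p i _ (by rintro rfl; exact h (Finset.mem_range.1 hi))

lemma norm_split_lp (hpr : 0 < p.toReal) (x : lp (fun _ : ℕ => ℂ) p) (m : ℕ) :
    (∑ i ∈ Finset.range m, ‖x i‖ ^ p.toReal) + ‖x - lpTrunc p x m‖ ^ p.toReal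
      = ‖x‖ ^ p.toReal := by
  set v := x - lpTrunc p x m with hv
  have hvap : ∀ j, (v : ∀ _ : ℕ, ℂ) j = if j < m then 0 else x j := by
    intro j
    rw [hv, lp.coeFn_sub, Pi.sub_apply, lpTrunc_apply]
    by_cases h : j < m <;> simp [h]
  have h1 : HasSum (fun i => ‖x i‖ ^ p.toReal) (‖x‖ ^ p.toReal) := lp.hasSum_norm hpr x
  have h2 : HasSum (fun i => ‖v i‖ ^ p.toReal) (‖v‖ ^ p.toReal) := lp.hasSum_norm hpr v
  have h3 : HasSum (fun i => if i < m then ‖x i‖ ^ p.toReal else 0)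
      (∑ i ∈ Finset.range m, ‖x i‖ ^ p.toReal) := by
    have h := hasSum_sum_of_ne_finset_zero (L := SummationFilter.unconditional ℕ) (s := Finset.range m)
      (f := fun i => if i < m then ‖x i‖ ^ p.toReal else 0)
      (fun i hi => by simp only; rw [if_neg (fun h => hi (Finset.mem_range.2 h))])
    have e : ∑ b ∈ Finset.range m, (if b < m then ‖x b‖ ^ p.toReal else 0)
        = ∑ i ∈ Finset.range m, ‖x i‖ ^ p.toReal := by
      refine Finset.sum_congr rfl fun i hi => ?_
      rw [if_pos (Finset.mem_range.1 hi)]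
    rwa [e] at h
  have h5 := h3.add h2
  have h6 : (fun b => (if b < m then ‖x b‖ ^ p.toReal else 0) + ‖v b‖ ^ p.toReal)
      = fun i => ‖x i‖ ^ p.toReal := by
    funext i
    by_cases h : i < m <;> simp [hvap i, h, Real.zero_rpow hpr.ne']
  rw [h6] at h5
  exact h5.unique h1

lemma homog_bound {X : Type*} [NormedAddCommGroup X] [NormedSpace ℂ X] {k : ℕ} {Q : X → ℂ}
    (hQ : IsHomogPoly X k Q) (hk : 0 < k) (hn : polyNorm X Q = 1) (v : X) :
    ‖Q v‖ ≤ ‖v‖ ^ k := by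
  obtain ⟨A, -, hA⟩ := hQ
  have bdd : BddAbove {r : ℝ | ∃ x : X, ‖x‖ ≤ 1 ∧ r = ‖Q x‖} := by
    refine ⟨‖A‖, ?_⟩
    rintro r ⟨x, hx, rfl⟩
    rw [hA]
    calc ‖A fun _ => x‖ ≤ ‖A‖ * ∏ _i : Fin k, ‖x‖ := A.le_opNorm _
      _ ≤ ‖A‖ * 1 := by
          refine mul_le_mul_of_nonneg_left ?_ (norm_nonneg A)
          exact Finset.prod_le_one (fun _ _ => norm_nonneg x) (fun _ _ => hx)
      _ = ‖A‖ := mul_one _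
  have hle1 : ∀ x : X, ‖x‖ ≤ 1 → ‖Q x‖ ≤ 1 := by
    intro x hx
    rw [← hn]
    exact le_csSup bdd ⟨x, hx, rfl⟩
  rcases eq_or_ne v 0 with rfl | hv
  · have h0 : Q 0 = 0 := by
      rw [hA]; exact A.map_coord_zero ⟨0, hk⟩ rfl
    simp [h0, zero_pow hk.ne']
  · set c : ℂ := (‖v‖ : ℂ) with hc
    have hc0 : c ≠ 0 := by
      simp [hc, norm_eq_zero, hv]
    set u : X := c⁻¹ • v with hu
    have hvu : v = c • u := (smul_inv_smul₀ hc0 v).symm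
    have hun : ‖u‖ = 1 := by
      rw [hu, norm_smul, norm_inv, hc]
      simp [norm_ne_zero_iff.2 hv]
    have hQv : Q v = c ^ k * Q u := by
      rw [hA, hA, hvu]
      have h := A.map_smul_univ (fun _ : Fin k => c) (fun _ : Fin k => u)
      simp only [Finset.prod_const, Finset.card_univ, Fintype.card_fin] at h
      rw [h, smul_eq_mul]
    rw [hQv, norm_mul, norm_pow]
    have hcv : ‖c‖ = ‖v‖ := by simp [hc]
    rw [hcv]
    calc ‖v‖ ^ k * ‖Q u‖ ≤ ‖v‖ ^ k * 1 :=
        mul_le_mul_of_nonneg_left (hle1 u hun.le) (by positivity)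
      _ = ‖v‖ ^ k := mul_one _

lemma amgm_aux {s t : ℝ} (hs : 0 ≤ s) (ht : 0 ≤ t) (hst : s + t ≤ 1)
    {l k : ℕ} (hl : 0 < l) (hk : 0 < k) :
    s ^ l * t ^ k ≤ (l : ℝ) ^ l * (k : ℝ) ^ k / ((l : ℝ) + (k : ℝ)) ^ (l + k) := by
  have hL : (0:ℝ) < (l:ℝ) := Nat.cast_pos.mpr hl
  have hK : (0:ℝ) < (k:ℝ) := Nat.cast_pos.mpr hk
  set L : ℝ := (l : ℝ)
  set K : ℝ := (k : ℝ)
  have hn : 0 < L + K := by linarith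
  have hw : L / (L + K) + K / (L + K) = 1 := by field_simp
  have hp1 : (0:ℝ) ≤ s * (L + K) / L := by positivity
  have hp2 : (0:ℝ) ≤ t * (L + K) / K := by positivity
  have h1 := Real.geom_mean_le_arith_mean2_weighted
    (div_nonneg hL.le hn.le) (div_nonneg hK.le hn.le)
    (p₁ := s * (L + K) / L) (p₂ := t * (L + K) / K) hp1 hp2 hw
  have h2 : L / (L + K) * (s * (L + K) / L) + K / (L + K) * (t * (L + K) / K) = s + t := by
    field_simp
  rw [h2] at h1
  have h3 : (s * (L + K) / L) ^ (L / (L + K)) * (t * (L + K) / K) ^ (K / (L + K)) ≤ 1 :=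
    h1.trans hst
  have h4 : ((s * (L + K) / L) ^ (L / (L + K)) * (t * (L + K) / K) ^ (K / (L + K))) ^ (L + K)
      ≤ 1 := by
    calc _ ≤ (1 : ℝ) ^ (L + K) :=
          Real.rpow_le_rpow (by positivity) h3 hn.le
      _ = 1 := Real.one_rpow _
  rw [Real.mul_rpow (Real.rpow_nonneg hp1 _) (Real.rpow_nonneg hp2 _),
    ← Real.rpow_mul hp1, ← Real.rpow_mul hp2,
    div_mul_cancel₀ _ hn.ne', div_mul_cancel₀ _ hn.ne',
    Real.rpow_natCast, Real.rpow_natCast] at h4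
  have expand : (s * (L + K) / L) ^ l * (t * (L + K) / K) ^ k
      = s ^ l * t ^ k * (L + K) ^ (l + k) / (L ^ l * K ^ k) := by
    rw [div_pow, div_pow, pow_add, mul_pow, mul_pow]
    field_simp
  rw [expand, div_le_one (by positivity)] at h4
  rw [le_div_iff₀ (by positivity)]
  linarith

end AuxLemmas

/-- For `1 < p < ∞`, `ω ∈ B_{ℓ_p} \ {0}` and `η > 0`, there is `m ∈ ℕ`
such that for every `ψ` in the fiber `ℳ_ω`, every `l ∈ ℕ`, every integer `k ≥ p` and
every norm-one continuous `k`-homogeneous polynomial `Q` not depending on the first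
`m` coordinates, `|ψ(Q)| ≤ (l^l k^k / (l+k)^{l+k})^{1/p} (1+η)^l / ‖ω‖^l`. -/
theorem exists_m_bound_on_tail_polynomials
    (p : ℝ≥0∞) [Fact (1 ≤ p)] (hp : 1 < p) (hptop : p ≠ ⊤)
    (ω : lp (fun _ : ℕ => ℂ) p) (hω : ‖ω‖ < 1) (hω0 : ω ≠ 0)
    (η : ℝ) (hη : 0 < η) :
    ∃ m : ℕ, ∀ ψ : SpectrumAu (lp (fun _ : ℕ => ℂ) p), memFiber ψ ω →
      ∀ l k : ℕ, p.toReal ≤ (k : ℝ) →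
        ∀ Q : lp (fun _ : ℕ => ℂ) p → ℂ,
          IsHomogPoly (lp (fun _ : ℕ => ℂ) p) k Q →
          polyNorm (lp (fun _ : ℕ => ℂ) p) Q = 1 →
          (∀ x, Q x = Q (x - lpTrunc p x m)) →
          ∀ hQ : MemAu (lp (fun _ : ℕ => ℂ) p) Q,
            ‖ψ.toFun Q hQ‖ ≤
              ((l : ℝ) ^ l * (k : ℝ) ^ k / ((l : ℝ) + (k : ℝ)) ^ (l + k)) ^ (1 / p.toReal) *
                ((1 + η) ^ l / ‖ω‖ ^ l) := by
  classical
  set pr := p.toReal with hprdef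
  have hpr1 : 1 < pr := by
    rw [hprdef, ← ENNReal.toReal_one]
    exact (ENNReal.toReal_lt_toReal one_ne_top hptop).mpr hp
  have hpr0 : 0 < pr := lt_trans one_pos hpr1
  have hωpos : 0 < ‖ω‖ := norm_pos_iff.mpr hω0
  have hηq : 0 < ‖ω‖ / (1 + η) := by positivity
  have hlt : ‖ω‖ / (1 + η) < ‖ω‖ := by
    rw [div_lt_iff₀ (by linarith)]
    nlinarith
  have hT : (‖ω‖ / (1 + η)) ^ pr < ‖ω‖ ^ pr := Real.rpow_lt_rpow hηq.le hlt hpr0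
  have hsum := (lp.hasSum_norm hpr0 ω).tendsto_sum_nat
  obtain ⟨m, hm⟩ := (hsum.eventually (eventually_gt_nhds hT)).exists
  refine ⟨m, ?_⟩
  intro ψ hψ l k hk Q hQhom hQnorm hQtail hQ
  have hk1 : 0 < k := by
    by_contra h
    push_neg at h
    interval_cases k
    simp only [Nat.cast_zero] at hk
    linarith
  have hQ1 : ∀ x ∈ closedBall (0 : lp (fun _ : ℕ => ℂ) p) 1, ‖Q x‖ ≤ 1 := by
    intro x hx
    rw [mem_closedBall, dist_zero_right] at hx
    calc ‖Q x‖ ≤ ‖x‖ ^ k := homog_bound hQhom hk1 hQnorm x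
      _ ≤ 1 := pow_le_one₀ (norm_nonneg x) hx
  rcases Nat.eq_zero_or_pos l with rfl | hl
  · have hb : ‖ψ.toFun Q hQ‖ ≤ 1 := ψ.bound' Q hQ 1 hQ1
    have hkk : ((k : ℝ)) ^ k ≠ 0 := pow_ne_zero k (by positivity)
    simpa [div_self hkk] using hb
  -- main case : 1 ≤ l
  set S := ∑ i ∈ Finset.range m, ‖ω i‖ ^ pr with hSdef
  have hm' : (‖ω‖ / (1 + η)) ^ pr < S := hm
  have hS0 : 0 < S := lt_trans (Real.rpow_pos_of_pos hηq pr) hm'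
  set N := S ^ (1 / pr) with hNdef
  have hN0 : 0 < N := Real.rpow_pos_of_pos hS0 _
  have hNpr : N ^ pr = S := by
    rw [hNdef, ← Real.rpow_mul hS0.le, one_div, inv_mul_cancel₀ hpr0.ne', Real.rpow_one]
  have hNlow : ‖ω‖ / (1 + η) < N := by
    have h := Real.rpow_lt_rpow (Real.rpow_nonneg hηq.le pr) hm' (by positivity : (0:ℝ) < 1 / pr)
    rwa [← Real.rpow_mul hηq.le, mul_one_div, div_self hpr0.ne', Real.rpow_one, ← hNdef] at h
  -- the norming functional supported on the first m coordinates
  set c : ℕ → ℂ := fun i =>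
    (starRingEnd ℂ) (ω i) * ((‖ω i‖ ^ (pr - 2) / N ^ (pr - 1) : ℝ) : ℂ) with hcdef
  set x' : lp (fun _ : ℕ => ℂ) p →L[ℂ] ℂ := ∑ i ∈ Finset.range m, c i • lpCoord p i with hx'def
  have hx'apply : ∀ x : lp (fun _ : ℕ => ℂ) p, x' x = ∑ i ∈ Finset.range m, c i * x i := by
    intro x
    rw [hx'def, ContinuousLinearMap.sum_apply]
    exact Finset.sum_congr rfl fun i _ => rfl
  have hnc : ∀ i, ‖c i‖ = ‖ω i‖ ^ (pr - 1) / N ^ (pr - 1) := by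
    intro i
    rw [hcdef]
    simp only
    rw [norm_mul, RCLike.norm_conj, Complex.norm_real, Real.norm_eq_abs,
      abs_of_nonneg (div_nonneg (Real.rpow_nonneg (norm_nonneg _) _) (Real.rpow_nonneg hN0.le _))]
    rcases eq_or_ne (ω i) 0 with h0 | h0
    · rw [h0, norm_zero, zero_mul, Real.zero_rpow (sub_pos.2 hpr1).ne', zero_div]
    · have hpos : 0 < ‖ω i‖ := norm_pos_iff.mpr h0
      rw [mul_div_assoc']
      congr 1
      have e2 : ‖ω i‖ ^ (pr - 1) = ‖ω i‖ ^ (1 : ℝ) * ‖ω i‖ ^ (pr - 2) := by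
        rw [← Real.rpow_add hpos]
        ring_nf
      rw [e2, Real.rpow_one]
  have hq := Real.HolderConjugate.conjExponent hpr1
  set q := Real.conjExponent pr with hqdef
  have hcq : ∑ i ∈ Finset.range m, ‖c i‖ ^ q = 1 := by
    have key : ∀ i ∈ Finset.range m, ‖c i‖ ^ q = ‖ω i‖ ^ pr / N ^ pr := by
      intro i _
      rw [hnc i, Real.div_rpow (Real.rpow_nonneg (norm_nonneg _) _) (Real.rpow_nonneg hN0.le _),
        ← Real.rpow_mul (norm_nonneg _), ← Real.rpow_mul hN0.le, hq.sub_one_mul_conj]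
    rw [Finset.sum_congr rfl key, ← Finset.sum_div, ← hSdef, ← hNpr, div_self]
    exact (Real.rpow_pos_of_pos hN0 pr).ne'
  have hx'ω : x' ω = (N : ℂ) := by
    rw [hx'apply]
    have key : ∀ i ∈ Finset.range m, c i * ω i = ((‖ω i‖ ^ pr / N ^ (pr - 1) : ℝ) : ℂ) := by
      intro i _
      rw [hcdef]
      simp only
      rw [mul_right_comm, ← Complex.normSq_eq_conj_mul_self, ← Complex.ofReal_mul]
      have hre : ‖ω i‖ ^ (2 : ℕ) * (‖ω i‖ ^ (pr - 2) / N ^ (pr - 1))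
          = ‖ω i‖ ^ pr / N ^ (pr - 1) := by
        rcases eq_or_ne (ω i) 0 with h0 | h0
        · rw [h0, norm_zero]
          simp [Real.zero_rpow hpr0.ne']
        · have hpos : 0 < ‖ω i‖ := norm_pos_iff.mpr h0
          have e2 : ‖ω i‖ ^ pr = ‖ω i‖ ^ (2 : ℕ) * ‖ω i‖ ^ (pr - 2) := by
            rw [← Real.rpow_natCast ‖ω i‖ 2, ← Real.rpow_add hpos]
            norm_num
          rw [e2, mul_div_assoc]
      rw [show Complex.normSq (ω i) = ‖ω i‖ ^ (2 : ℕ) by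
            rw [Complex.normSq_eq_norm_sq], hre]
    rw [Finset.sum_congr rfl key, ← Complex.ofReal_sum]
    congr 1
    rw [← Finset.sum_div, ← hSdef, ← hNpr, ← Real.rpow_sub hN0]
    have e3 : pr - (pr - 1) = 1 := by ring
    rw [e3, Real.rpow_one]
  -- the sup bound
  set D : ℝ := (l : ℝ) ^ l * (k : ℝ) ^ k / ((l : ℝ) + (k : ℝ)) ^ (l + k) with hDdef
  have hD0 : 0 ≤ D := by
    rw [hDdef]
    have h1 : (0:ℝ) < (l:ℝ) := Nat.cast_pos.mpr hl
    have h2 : (0:ℝ) < (k:ℝ) := Nat.cast_pos.mpr hk1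
    positivity
  set C : ℝ := D ^ (1 / pr) with hCdef
  have hC0 : 0 ≤ C := Real.rpow_nonneg hD0 _
  -- pointwise bound on the closed unit ball
  have hbound : ∀ x ∈ closedBall (0 : lp (fun _ : ℕ => ℂ) p) 1, ‖(x' x) ^ l * Q x‖ ≤ C := by
    intro x hx
    rw [mem_closedBall, dist_zero_right] at hx
    set A := ∑ i ∈ Finset.range m, ‖x i‖ ^ pr with hAdef
    have hA0 : 0 ≤ A := Finset.sum_nonneg fun i _ => Real.rpow_nonneg (norm_nonneg _) _
    set B := ‖x - lpTrunc p x m‖ with hBdef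
    have hB0 : 0 ≤ B := norm_nonneg _
    have hAB : A + B ^ pr ≤ 1 := by
      have h := norm_split_lp p hpr0 x m
      rw [← hprdef] at h
      rw [← hAdef, ← hBdef] at h
      have h2 : ‖x‖ ^ pr ≤ 1 := Real.rpow_le_one (norm_nonneg _) hx hpr0.le
      linarith
    have hxp : ‖x' x‖ ≤ A ^ (1 / pr) := by
      rw [hx'apply]
      calc ‖∑ i ∈ Finset.range m, c i * x i‖ ≤ ∑ i ∈ Finset.range m, ‖c i * x i‖ :=
            norm_sum_le _ _
        _ = ∑ i ∈ Finset.range m, ‖x i‖ * ‖c i‖ := by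
            refine Finset.sum_congr rfl fun i _ => ?_
            rw [norm_mul, mul_comm]
        _ ≤ (∑ i ∈ Finset.range m, ‖x i‖ ^ pr) ^ (1 / pr)
              * (∑ i ∈ Finset.range m, ‖c i‖ ^ q) ^ (1 / q) :=
            Real.inner_le_Lp_mul_Lq_of_nonneg (s := Finset.range m) hq
              (fun i _ => norm_nonneg _) (fun i _ => norm_nonneg _)
        _ = A ^ (1 / pr) := by rw [hcq, Real.one_rpow, mul_one, ← hAdef]
    have hQx : ‖Q x‖ ≤ B ^ k := by
      rw [hQtail x]
      calc ‖Q (x - lpTrunc p x m)‖ ≤ ‖x - lpTrunc p x m‖ ^ k :=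
            homog_bound hQhom hk1 hQnorm _
        _ = B ^ k := by rw [hBdef]
    have step1 : ‖(x' x) ^ l * Q x‖ ≤ (A ^ (1 / pr)) ^ l * B ^ k := by
      rw [norm_mul, norm_pow]
      exact mul_le_mul (pow_le_pow_left₀ (norm_nonneg _) hxp l) hQx (norm_nonneg _)
        (pow_nonneg (Real.rpow_nonneg hA0 _) l)
    have eA : (A ^ (1 / pr)) ^ l = (A ^ l) ^ (1 / pr) := by
      rw [← Real.rpow_natCast (A ^ (1 / pr)) l, ← Real.rpow_mul hA0,
        ← Real.rpow_natCast A l, ← Real.rpow_mul hA0]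
      ring_nf
    have eB : B ^ k = ((B ^ pr) ^ k) ^ (1 / pr) := by
      rw [← Real.rpow_natCast (B ^ pr) k, ← Real.rpow_mul hB0, ← Real.rpow_mul hB0]
      have e4 : pr * (k : ℝ) * (1 / pr) = (k : ℝ) := by field_simp
      rw [e4, Real.rpow_natCast]
    have step2 : (A ^ (1 / pr)) ^ l * B ^ k = (A ^ l * (B ^ pr) ^ k) ^ (1 / pr) := by
      rw [eA, eB, ← Real.mul_rpow (pow_nonneg hA0 l)
        (pow_nonneg (Real.rpow_nonneg hB0 _) k)]
    have step3 : (A ^ l * (B ^ pr) ^ k) ^ (1 / pr) ≤ C := by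
      rw [hCdef, hDdef]
      exact Real.rpow_le_rpow
        (mul_nonneg (pow_nonneg hA0 l) (pow_nonneg (Real.rpow_nonneg hB0 _) k))
        (amgm_aux hA0 (Real.rpow_nonneg hB0 _) hAB hl hk1)
        (by positivity)
    calc ‖(x' x) ^ l * Q x‖ ≤ _ := step1
      _ = _ := step2
      _ ≤ C := step3
  -- multiplicativity
  set G : ℕ → lp (fun _ : ℕ => ℂ) p → ℂ := fun n x => (x' x) ^ n with hGdef
  have hx'le : ∀ x ∈ closedBall (0 : lp (fun _ : ℕ => ℂ) p) 1, ‖x' x‖ ≤ ‖x'‖ := by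
    intro x hx
    rw [mem_closedBall, dist_zero_right] at hx
    calc ‖x' x‖ ≤ ‖x'‖ * ‖x‖ := x'.le_opNorm x
      _ ≤ ‖x'‖ * 1 := mul_le_mul_of_nonneg_left hx (norm_nonneg _)
      _ = ‖x'‖ := mul_one _
  have hGb : ∀ n, ∀ x ∈ closedBall (0 : lp (fun _ : ℕ => ℂ) p) 1, ‖G n x‖ ≤ ‖x'‖ ^ n := by
    intro n x hx
    rw [hGdef]
    simp only [norm_pow]
    exact pow_le_pow_left₀ (norm_nonneg _) (hx'le x hx) n
  have hGmem : ∀ n, MemAu (lp (fun _ : ℕ => ℂ) p) (G n) := by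
    intro n
    induction n with
    | zero =>
        have e : G 0 = (1 : lp (fun _ : ℕ => ℂ) p → ℂ) := by funext x; simp [hGdef]
        rw [e]; exact memAu_one (lp (fun _ : ℕ => ℂ) p)
    | succ n ih =>
        have e : G (n + 1) = ⇑x' * G n := by
          funext x; simp [hGdef, pow_succ' (x' x) n]
        rw [e]
        exact memAu_mul (memAu_clm x') ih hx'le (hGb n)
  have hψ1 : ∀ h1 : MemAu (lp (fun _ : ℕ => ℂ) p) (1 : lp (fun _ : ℕ => ℂ) p → ℂ), ψ.toFun 1 h1 = 1 := by
    intro h1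
    obtain ⟨f, hf, hf0⟩ := ψ.nonzero'
    have hmem : MemAu (lp (fun _ : ℕ => ℂ) p) (1 * f) := by rw [one_mul]; exact hf
    have e := ψ.map_mul' 1 f h1 hf hmem
    have e2 : ψ.toFun (1 * f) hmem = ψ.toFun f hf :=
      ψ.ext' _ _ hmem hf fun x _ => by simp
    rw [e2] at e
    exact ((mul_left_eq_self₀).mp e.symm).resolve_right hf0
  have hψG : ∀ n (h : MemAu (lp (fun _ : ℕ => ℂ) p) (G n)), ψ.toFun (G n) h = (N : ℂ) ^ n := by
    intro n
    induction n with
    | zero =>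
        intro h
        have e : EqOn (G 0) (1 : lp (fun _ : ℕ => ℂ) p → ℂ) (closedBall (0 : lp (fun _ : ℕ => ℂ) p) 1) := fun x _ => by simp [hGdef]
        rw [ψ.ext' (G 0) 1 h (memAu_one (lp (fun _ : ℕ => ℂ) p)) e, hψ1 (memAu_one (lp (fun _ : ℕ => ℂ) p)), pow_zero]
    | succ n ih =>
        intro h
        have e : G (n + 1) = ⇑x' * G n := by
          funext x; simp [hGdef, pow_succ' (x' x) n]
        have h' : MemAu (lp (fun _ : ℕ => ℂ) p) (⇑x' * G n) := e ▸ h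
        rw [ψ.ext' (G (n + 1)) (⇑x' * G n) h h' (fun x _ => by rw [e]),
          ψ.map_mul' ⇑x' (G n) (memAu_clm x') (hGmem n) h', hψ x' (memAu_clm x'), hx'ω,
          ih (hGmem n), pow_succ']
  -- put everything together
  have hFmem : MemAu (lp (fun _ : ℕ => ℂ) p) (G l * Q) := memAu_mul (hGmem l) hQ (hGb l) hQ1
  have hψF : ψ.toFun (G l * Q) hFmem = (N : ℂ) ^ l * ψ.toFun Q hQ := by
    rw [ψ.map_mul' (G l) Q (hGmem l) hQ hFmem, hψG l (hGmem l)]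
  have hFb : ‖ψ.toFun (G l * Q) hFmem‖ ≤ C := by
    apply ψ.bound'
    intro x hx
    exact hbound x hx
  rw [hψF, norm_mul, norm_pow, Complex.norm_real, Real.norm_eq_abs, abs_of_pos hN0] at hFb
  -- final arithmetic
  have hNl : 0 < N ^ l := pow_pos hN0 l
  have hend : ‖ψ.toFun Q hQ‖ ≤ C / N ^ l := by
    rw [le_div_iff₀ hNl]
    linarith [hFb]
  refine hend.trans ?_
  have hlow : (‖ω‖ / (1 + η)) ^ l ≤ N ^ l := pow_le_pow_left₀ hηq.le hNlow.le l
  have hql : 0 < (‖ω‖ / (1 + η)) ^ l := pow_pos hηq l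
  calc C / N ^ l ≤ C / (‖ω‖ / (1 + η)) ^ l := div_le_div_of_nonneg_left hC0 hql hlow
    _ = C * ((1 + η) ^ l / ‖ω‖ ^ l) := by
        rw [div_pow, div_div_eq_mul_div, mul_div_assoc]


end
end

section
/- Let X be a complex Banach space and φ ∈ ℳ(𝒜_u(B_X)). If the radius function satisfies R(φ) < 1, then φ belongs to the Gleason part of δ_0, i.e. φ ∈ 𝒢𝒫(δ_0). -/
open Metric Filter Set Topology ENNReal

noncomputable section

/-- Auxiliary: constant functions (as `c • 1`) belong to `𝒜_u(B_X)`. -/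
theorem memAu_smul_one (X : Type*) [NormedAddCommGroup X] [NormedSpace ℂ X] (c : ℂ) :
    MemAu X (c • (1 : X → ℂ)) := by
  have hc : c • (1 : X → ℂ) = fun _ => c := by funext y; simp
  rw [hc]
  exact ⟨fun _ _ => differentiableWithinAt_const c,
    uniformContinuous_const.mono_left inf_le_left⟩

/-- Auxiliary: `𝒜_u(B_X)` is stable under adding a constant. -/
theorem memAu_add_smul_one {X : Type*} [NormedAddCommGroup X] [NormedSpace ℂ X]
    {f : X → ℂ} (hf : MemAu X f) (c : ℂ) : MemAu X (f + c • (1 : X → ℂ)) := by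
  have hc : f + c • (1 : X → ℂ) = fun x => f x + c := by funext y; simp
  rw [hc]
  constructor
  · exact fun x hx => ((hf.1 x hx).add (differentiableWithinAt_const c))
  · have hUC : UniformContinuous (fun z : ℂ => z + c) :=
      uniformContinuous_id.add uniformContinuous_const
    exact Filter.Tendsto.comp hUC hf.2

/-- Auxiliary: every element of the spectrum sends `1` to `1`. -/
theorem spectrumAu_toFun_one {X : Type*} [NormedAddCommGroup X] [NormedSpace ℂ X]
    (φ : SpectrumAu X) : φ.toFun 1 (memAu_one X) = 1 := by
  obtain ⟨g, hg, hne⟩ := φ.nonzero'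
  have hg1 : MemAu X (g * 1) := by rwa [mul_one]
  have h1 : φ.toFun (g * 1) hg1 = φ.toFun g hg * φ.toFun 1 (memAu_one X) :=
    φ.map_mul' g 1 hg (memAu_one X) hg1
  have h2 : φ.toFun (g * 1) hg1 = φ.toFun g hg :=
    φ.ext' (g * 1) g hg1 hg fun x _ => mul_one (g x)
  have h3 : φ.toFun g hg * 1 = φ.toFun g hg * φ.toFun 1 (memAu_one X) := by
    rw [mul_one, ← h1, h2]
  exact (mul_left_cancel₀ hne h3).symm

/-- Auxiliary Schwarz-type estimate: a holomorphic function on the unit ball bounded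
by `1` satisfies `‖f x - f 0‖ ≤ 2 ‖x‖`. -/
theorem schwarz_two {X : Type*} [NormedAddCommGroup X] [NormedSpace ℂ X]
    {f : X → ℂ} (hd : DifferentiableOn ℂ f (ball 0 1))
    (hb : ∀ y ∈ ball (0 : X) 1, ‖f y‖ ≤ 1) {x : X} (hx : ‖x‖ < 1) :
    ‖f x - f 0‖ ≤ 2 * ‖x‖ := by
  rcases eq_or_ne x 0 with rfl | hx0
  · simp
  have hxn : 0 < ‖x‖ := norm_pos_iff.2 hx0
  refine le_of_forall_pos_le_add fun ε hε => ?_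
  set g : ℂ → ℂ := fun ζ => f (ζ • x) with hg
  have hsm : ∀ ζ ∈ ball (0 : ℂ) (1 / ‖x‖), ζ • x ∈ ball (0 : X) 1 := by
    intro ζ hζ
    rw [mem_ball_zero_iff] at hζ ⊢
    calc ‖ζ • x‖ = ‖ζ‖ * ‖x‖ := norm_smul ζ x
      _ < (1 / ‖x‖) * ‖x‖ := by exact mul_lt_mul_of_pos_right hζ hxn
      _ = 1 := by field_simp
  have hdg : DifferentiableOn ℂ g (ball (0 : ℂ) (1 / ‖x‖)) := by
    intro ζ hζ
    exact ((hd _ (hsm ζ hζ)).comp ζ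
      ((differentiableWithinAt_id.smul_const x)) (fun w hw => hsm w hw))
  have hg0 : g 0 = f 0 := by simp [hg]
  have hmaps : MapsTo g (ball (0 : ℂ) (1 / ‖x‖)) (ball (g 0) (2 + ε / ‖x‖)) := by
    intro ζ hζ
    rw [mem_ball, dist_eq_norm, hg0]
    have h0m : (0 : X) ∈ ball (0 : X) 1 := by simp
    have h1 : ‖g ζ‖ ≤ 1 := hb _ (hsm ζ hζ)
    have h2 : ‖f 0‖ ≤ 1 := hb _ h0m
    have h3 : ‖g ζ - f 0‖ ≤ 2 := by
      calc ‖g ζ - f 0‖ ≤ ‖g ζ‖ + ‖f 0‖ := norm_sub_le _ _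
        _ ≤ 2 := by linarith
    have : 0 < ε / ‖x‖ := div_pos hε hxn
    linarith
  have h1m : (1 : ℂ) ∈ ball (0 : ℂ) (1 / ‖x‖) := by
    rw [mem_ball_zero_iff]
    simp only [norm_one]
    rw [lt_div_iff₀ hxn]
    linarith
  have key := Complex.dist_le_div_mul_dist_of_mapsTo_ball hdg (hmaps.mono_right ball_subset_closedBall) h1m
  have hg1 : g 1 = f x := by simp [hg]
  rw [hg1, hg0, dist_eq_norm, dist_eq_norm] at key
  have hd10 : ‖(1 : ℂ) - 0‖ = 1 := by simp
  rw [hd10, mul_one] at key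
  calc ‖f x - f 0‖ ≤ (2 + ε / ‖x‖) / (1 / ‖x‖) := key
    _ = 2 * ‖x‖ + ε := by field_simp

/-- If `φ ∈ ℳ(𝒜_u(B_X))` has radius function `R(φ) < 1`, then `φ`
belongs to the Gleason part of `δ_0`. -/
theorem mem_gleason_part_of_zero_of_radius_lt_one
    {X : Type*} [NormedAddCommGroup X] [NormedSpace ℂ X]
    (φ : SpectrumAu X) (h : radiusFn φ < 1) :
    φ ∈ gleasonPart (evalHom (0 : X)) := by
  classical
  -- The defining set of the radius function is nonempty: `1` belongs to it.
  set S : Set ℝ := {r : ℝ | 0 < r ∧ r ≤ 1 ∧ ∀ (f : X → ℂ) (hf : MemAu X f) (C : ℝ),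
    (∀ x ∈ ball (0 : X) r, ‖f x‖ ≤ C) → ‖φ.toFun f hf‖ ≤ C} with hS
  have hone : (1 : ℝ) ∈ S := by
    refine ⟨one_pos, le_refl 1, fun f hf C hC => ?_⟩
    refine φ.bound' f hf C fun x hx => ?_
    have hcl : x ∈ closure (ball (0 : X) 1) := by
      rwa [closure_ball (0 : X) one_ne_zero]
    have hnb : (𝓝[ball (0 : X) 1] x).NeBot := mem_closure_iff_nhdsWithin_neBot.1 hcl
    have hct : ContinuousWithinAt f (closedBall (0 : X) 1) x :=
      hf.2.continuousOn x hx
    have ht : Tendsto f (𝓝[ball (0 : X) 1] x) (𝓝 (f x)) :=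
      hct.mono_left (nhdsWithin_mono x ball_subset_closedBall)
    refine le_of_tendsto ht.norm ?_
    exact eventually_mem_nhdsWithin.mono hC
  have hSne : S.Nonempty := ⟨1, hone⟩
  -- extract a radius `r < 1` witnessing the bound
  have hinf : sInf S < 1 := h
  obtain ⟨r, hrS, hr1⟩ := exists_lt_of_csInf_lt hSne hinf
  obtain ⟨hr0, hr1', hP⟩ := hrS
  -- bound every element of the set defining the Gleason distance by `2 * r`
  rw [gleasonPart, Set.mem_setOf_eq, gleasonDist]
  have hbound : ∀ s ∈ {r : ℝ | ∃ (f : X → ℂ) (hf : MemAu X f),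
      (∀ x ∈ closedBall (0 : X) 1, ‖f x‖ ≤ 1) ∧
      r = ‖(evalHom (0 : X)).toFun f hf - φ.toFun f hf‖}, s ≤ 2 * r := by
    rintro s ⟨f, hf, hb, rfl⟩
    have he0 : (evalHom (0 : X)).toFun f hf = f 0 := by
      rw [evalHom]
      rw [dif_pos (by simp : ‖(0 : X)‖ ≤ 1)]
      rfl
    set a : ℂ := f 0 with ha
    have hg1 : MemAu X ((-a) • (1 : X → ℂ)) := memAu_smul_one X (-a)
    have hh : MemAu X (f + (-a) • (1 : X → ℂ)) := memAu_add_smul_one hf (-a)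
    have hsum : φ.toFun (f + (-a) • (1 : X → ℂ)) hh
        = φ.toFun f hf + φ.toFun ((-a) • (1 : X → ℂ)) hg1 :=
      φ.map_add' f ((-a) • (1 : X → ℂ)) hf hg1 hh
    have hsmul : φ.toFun ((-a) • (1 : X → ℂ)) hg1
        = (-a) * φ.toFun 1 (memAu_one X) :=
      φ.map_smul' (-a) 1 (memAu_one X) hg1
    have hone' : φ.toFun 1 (memAu_one X) = 1 := spectrumAu_toFun_one φ
    have hval : φ.toFun (f + (-a) • (1 : X → ℂ)) hh = φ.toFun f hf - a := by
      rw [hsum, hsmul, hone']; ring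
    -- bound `φ` applied to `f - f 0` using the radius property and Schwarz's lemma
    have hbBall : ∀ y ∈ ball (0 : X) 1, ‖f y‖ ≤ 1 := fun y hy =>
      hb y (ball_subset_closedBall hy)
    have hCb : ∀ x ∈ ball (0 : X) r, ‖(f + (-a) • (1 : X → ℂ)) x‖ ≤ 2 * r := by
      intro x hx
      have hxr : ‖x‖ < r := mem_ball_zero_iff.1 hx
      have hx1 : ‖x‖ < 1 := lt_of_lt_of_le hxr hr1'
      have hsz : ‖f x - f 0‖ ≤ 2 * ‖x‖ := schwarz_two hf.1 hbBall hx1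
      have hfx : (f + (-a) • (1 : X → ℂ)) x = f x - a := by simp [ha]; ring
      rw [hfx, ha]
      calc ‖f x - f 0‖ ≤ 2 * ‖x‖ := hsz
        _ ≤ 2 * r := by linarith
    have hphi : ‖φ.toFun (f + (-a) • (1 : X → ℂ)) hh‖ ≤ 2 * r :=
      hP (f + (-a) • (1 : X → ℂ)) hh (2 * r) hCb
    rw [hval] at hphi
    rw [he0]
    calc ‖a - φ.toFun f hf‖ = ‖φ.toFun f hf - a‖ := norm_sub_rev _ _
      _ ≤ 2 * r := hphi
  have hsup : sSup {r : ℝ | ∃ (f : X → ℂ) (hf : MemAu X f),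
      (∀ x ∈ closedBall (0 : X) 1, ‖f x‖ ≤ 1) ∧
      r = ‖(evalHom (0 : X)).toFun f hf - φ.toFun f hf‖} ≤ 2 * r :=
    Real.sSup_le hbound (by linarith)
  calc sSup _ ≤ 2 * r := hsup
    _ < 2 := by linarith

end
end

section
/- Let X be a complex Banach space and suppose φ ∈ ℳ(𝒜_u(B_X)) satisfies φ = w*-lim δ_{z_α} for some net {z_α}_α contained in the closed unit ball of X, and φ ∉ 𝒢𝒫(δ_0). Then there exists a net {z̃_α}_α contained in the unit sphere S_X such that φ = w*-lim δ_{z̃_α}. -/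
open Metric Filter Set Topology ENNReal

noncomputable section

theorem schwarzBoundAux {X : Type*} [NormedAddCommGroup X] [NormedSpace ℂ X]
    (f : X → ℂ) (hd : DifferentiableOn ℂ f (ball (0 : X) 1))
    (hb : ∀ x ∈ closedBall (0 : X) 1, ‖f x‖ ≤ 1) {x : X} (hx : ‖x‖ < 1) :
    ‖f x - f 0‖ ≤ 2 * ‖x‖ := by
  rcases eq_or_ne x 0 with rfl | hx0
  · simp
  have hxpos : (0 : ℝ) < ‖x‖ := norm_pos_iff.2 hx0
  set u : X := ((‖x‖ : ℂ))⁻¹ • x with hu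
  have hunorm : ‖u‖ = 1 := by
    rw [hu, norm_smul, norm_inv, Complex.norm_real, Real.norm_eq_abs, abs_norm,
      inv_mul_cancel₀ hxpos.ne']
  set g : ℂ → ℂ := fun w => f (w • u) with hg
  have hgd : DifferentiableOn ℂ g (ball (0 : ℂ) 1) := by
    apply hd.comp ((differentiable_id.smul_const u).differentiableOn)
    intro w hw
    simp only [mem_ball_zero_iff] at hw ⊢
    rw [norm_smul, hunorm, mul_one]; exact hw
  have hgball : ∀ w ∈ ball (0 : ℂ) 1, ‖g w‖ ≤ 1 := by
    intro w hw
    apply hb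
    simp only [mem_ball_zero_iff] at hw
    simp only [mem_closedBall_zero_iff]
    rw [norm_smul, hunorm, mul_one]; exact hw.le
  have hg0 : g 0 = f 0 := by simp [hg]
  have hgx : g ((‖x‖ : ℂ)) = f x := by
    show f ((‖x‖ : ℂ) • ((‖x‖ : ℂ))⁻¹ • x) = f x
    rw [smul_smul, mul_inv_cancel₀ (by exact_mod_cast hxpos.ne' : ((‖x‖ : ℂ)) ≠ 0), one_smul]
  have hxball : ((‖x‖ : ℂ)) ∈ ball (0 : ℂ) 1 := by
    simp only [mem_ball_zero_iff, Complex.norm_real, Real.norm_eq_abs, abs_norm]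
    exact hx
  have key : ∀ R : ℝ, 2 < R → ‖f x - f 0‖ ≤ R * ‖x‖ := by
    intro R hR
    have hmaps : MapsTo g (ball (0 : ℂ) 1) (ball (g 0) R) := by
      intro w hw
      rw [mem_ball, dist_eq_norm]
      calc ‖g w - g 0‖ ≤ ‖g w‖ + ‖g 0‖ := norm_sub_le _ _
        _ ≤ 1 + 1 := add_le_add (hgball w hw) (hgball 0 (by simp))
        _ < R := by linarith
    have := Complex.dist_le_div_mul_dist_of_mapsTo_ball hgd (hmaps.mono_right ball_subset_closedBall) hxball
    rw [hgx, hg0, dist_eq_norm, dist_zero_right, Complex.norm_real, Real.norm_eq_abs,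
      abs_norm, div_one] at this
    exact this
  refine le_of_forall_pos_le_add fun ε hε => ?_
  have hdiv : 0 < ε / ‖x‖ := div_pos hε hxpos
  have h2 := key (2 + ε / ‖x‖) (by linarith)
  rw [add_mul, div_mul_cancel₀ _ hxpos.ne'] at h2
  exact h2

/-- If `φ ∈ ℳ(𝒜_u(B_X))` is the weak-star limit of a net of
evaluations at points of the closed unit ball and `φ ∉ 𝒢𝒫(δ_0)`, then `φ` is the
weak-star limit of a net of evaluations at points of the unit sphere. -/
theorem exists_sphere_net_of_not_mem_gleason_zero
    {X : Type*} [NormedAddCommGroup X] [NormedSpace ℂ X]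
    {ι : Type*} (l : Filter ι) [l.NeBot]
    (z : ι → X) (hz : ∀ α, ‖z α‖ ≤ 1)
    (φ : SpectrumAu X) (hconv : WStarTendsto l (fun α => evalHom (z α)) φ)
    (hφ : φ ∉ gleasonPart (evalHom (0 : X))) :
    ∃ z' : ι → X, (∀ α, ‖z' α‖ = 1) ∧ WStarTendsto l (fun α => evalHom (z' α)) φ := by
  classical
  have hev : ∀ (x : X) (hx : ‖x‖ ≤ 1) (f : X → ℂ) (hf : MemAu X f),
      (evalHom x).toFun f hf = f x := by
    intro x hx f hf
    rw [evalHom, dif_pos hx]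
    rfl
  -- Step 1: the norms tend to 1.
  have hnorm : Tendsto (fun α => ‖z α‖) l (𝓝 1) := by
    by_contra h
    rw [Metric.tendsto_nhds] at h
    push_neg at h
    obtain ⟨ε, hε, hfreq⟩ := h
    set ε' := min ε 1 with hε'def
    have hε'0 : 0 < ε' := lt_min hε one_pos
    have hε'1 : ε' ≤ 1 := min_le_right ε 1
    have hfreq : ∃ᶠ x in l, ¬ dist ‖z x‖ 1 < ε := hfreq.mono fun _ h => not_lt.2 h
    have hfreq' : ∃ᶠ α in l, ‖z α‖ ≤ 1 - ε' := by
      refine hfreq.mono fun α hα => ?_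
      rw [not_lt, Real.dist_eq, abs_sub_comm, abs_of_nonneg (by linarith [hz α])] at hα
      have := min_le_left ε 1
      linarith
    have hNe : (l ⊓ 𝓟 {α | ‖z α‖ ≤ 1 - ε'}).NeBot := frequently_iff_neBot.1 hfreq'
    apply hφ
    have hle : gleasonDist (evalHom (0 : X)) φ ≤ 2 * (1 - ε') := by
      apply Real.sSup_le
      · rintro r ⟨f, hf, hb, rfl⟩
        rw [hev 0 (by simp) f hf]
        have h1' : Tendsto (fun α => f (z α)) (l ⊓ 𝓟 {α | ‖z α‖ ≤ 1 - ε'})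
            (𝓝 (φ.toFun f hf)) := by
          refine (Tendsto.mono_left ?_ inf_le_left)
          exact (hconv f hf).congr fun α => hev _ (hz α) f hf
        have hlim : Tendsto (fun α => ‖f 0 - f (z α)‖) (l ⊓ 𝓟 {α | ‖z α‖ ≤ 1 - ε'})
            (𝓝 ‖f 0 - φ.toFun f hf‖) := (tendsto_const_nhds.sub h1').norm
        refine le_of_tendsto hlim ?_
        filter_upwards [eventually_inf_principal.2
          (Eventually.of_forall fun α (hα : ‖z α‖ ≤ 1 - ε') => hα)] with α hα
        rw [norm_sub_rev]
        calc ‖f (z α) - f 0‖ ≤ 2 * ‖z α‖ :=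
              schwarzBoundAux f hf.1 hb (by linarith)
          _ ≤ 2 * (1 - ε') := by linarith
      · linarith
    have : gleasonDist (evalHom (0 : X)) φ < 2 := by linarith
    exact this
  -- Obtain a unit vector to use as a junk value.
  have hex : ∃ᶠ α in l, (2 : ℝ)⁻¹ < ‖z α‖ :=
    (hnorm.eventually (eventually_gt_nhds (by norm_num : (2 : ℝ)⁻¹ < 1))).frequently
  obtain ⟨α₀, hα₀⟩ := hex.exists
  have he0 : z α₀ ≠ 0 := by
    intro h
    rw [h, norm_zero] at hα₀
    norm_num at hα₀
  have normalize_norm : ∀ x : X, x ≠ 0 → ‖((‖x‖ : ℂ))⁻¹ • x‖ = 1 := by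
    intro x hx0
    rw [norm_smul, norm_inv, Complex.norm_real, Real.norm_eq_abs, abs_norm,
      inv_mul_cancel₀ (norm_ne_zero_iff.2 hx0)]
  set u0 : X := ((‖z α₀‖ : ℂ))⁻¹ • z α₀ with hu0def
  have hu0 : ‖u0‖ = 1 := normalize_norm _ he0
  refine ⟨fun α => if h : z α = 0 then u0 else ((‖z α‖ : ℂ))⁻¹ • z α, fun α => ?_, ?_⟩
  · by_cases h : z α = 0
    · simp [h, hu0]
    · simp only [h, dif_neg, not_false_iff]
      exact normalize_norm _ h
  · set z' : ι → X := fun α => if h : z α = 0 then u0 else ((‖z α‖ : ℂ))⁻¹ • z α with hz'def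
    have hz'norm : ∀ α, ‖z' α‖ = 1 := by
      intro α
      by_cases h : z α = 0
      · simp [hz'def, h, hu0]
      · simp only [hz'def, h, dif_neg, not_false_iff]
        exact normalize_norm _ h
    have hdist0 : Tendsto (fun α => dist (z' α) (z α)) l (𝓝 0) := by
      have hlim : Tendsto (fun α => 1 - ‖z α‖) l (𝓝 0) := by
        have h1 : Tendsto (fun α => (1 : ℝ) - ‖z α‖) l (𝓝 (1 - 1)) :=
          tendsto_const_nhds.sub hnorm
        simpa using h1
      refine Tendsto.congr' ?_ hlim
      filter_upwards [hnorm.eventually (eventually_gt_nhds (by norm_num : (0 : ℝ) < 1))]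
        with α hα
      have h0 : z α ≠ 0 := norm_pos_iff.1 hα
      have hne : (‖z α‖ : ℝ) ≠ 0 := hα.ne'
      simp only [hz'def, dif_neg h0, not_false_iff]
      rw [dist_eq_norm]
      have : ((‖z α‖ : ℂ))⁻¹ • z α - z α = (((‖z α‖ : ℂ))⁻¹ - 1) • z α := by
        rw [sub_smul, one_smul]
      rw [this, norm_smul]
      have hcast : ((‖z α‖ : ℂ))⁻¹ - 1 = (((‖z α‖⁻¹ - 1 : ℝ)) : ℂ) := by
        push_cast
        ring
      rw [hcast, Complex.norm_real, Real.norm_eq_abs,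
        abs_of_nonneg (by rw [sub_nonneg]; exact one_le_inv₀ hα |>.2 (hz α))]
      field_simp
    intro f hf
    have key : Tendsto (fun α => f (z α)) l (𝓝 (φ.toFun f hf)) :=
      (hconv f hf).congr fun α => hev _ (hz α) f hf
    have hsub : Tendsto (fun α => f (z' α) - f (z α)) l (𝓝 0) := by
      rw [NormedAddCommGroup.tendsto_nhds_zero]
      intro ε hε
      obtain ⟨δ, hδ, hδ'⟩ := Metric.uniformContinuousOn_iff.1 hf.2 ε hε
      filter_upwards [hdist0.eventually (eventually_lt_nhds hδ)] with α hα
      rw [← dist_eq_norm]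
      exact hδ' _ (by simp [mem_closedBall_zero_iff, (hz'norm α).le])
        _ (by simp [mem_closedBall_zero_iff, hz α]) hα
    have : Tendsto (fun α => f (z' α)) l (𝓝 (0 + φ.toFun f hf)) := by
      refine Tendsto.congr (fun α => ?_) (hsub.add key)
      ring
    rw [zero_add] at this
    refine this.congr fun α => (hev _ (by rw [hz'norm α]) f hf).symm


end
end

section
/- The 4-homogeneous polynomial Q on the complex space ℓ_1 given by Q(x) = Σ_{i<j} (x(i) x(j))² has norm ‖Q‖ = sup{|Q(x)| : ‖x‖₁ ≤ 1} = 1/16; moreover the supremum is attained at x₀ = (1/2, 1/2, 0, 0, …). -/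
open Metric Filter Set Topology ENNReal

noncomputable section

/-- The point `x₀ = (1/2, 1/2, 0, 0, …)` of `ℓ_1`. -/
def xZero : lp (fun _ : ℕ => ℂ) 1 :=
  lp.single 1 0 ((1 : ℂ) / 2) + lp.single 1 1 ((1 : ℂ) / 2)


section AuxQ


lemma key_sum_bound {s : ℕ → ℝ} (hpos : ∀ i, 0 ≤ s i) (hs : Summable s)
    (h1 : ∑' i, s i ≤ 1) :
    ∑' q : {q : ℕ × ℕ // q.1 < q.2}, (s q.1.1 * s q.1.2) ^ 2 ≤ 1 / 16 := by
  have hS0 : (0:ℝ) ≤ ∑' i, s i := tsum_nonneg hpos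
  have hle : ∀ i, s i ≤ 1 := fun i => (Summable.le_tsum hs i fun j _ => hpos j).trans h1
  have hs2 : Summable (fun i => s i ^ 2) :=
    Summable.of_nonneg_of_le (fun i => sq_nonneg _)
      (fun i => by nlinarith [hpos i, hle i]) hs
  set A := ∑' i, s i ^ 2 with hA
  have hA0 : 0 ≤ A := tsum_nonneg fun i => sq_nonneg _
  set F : ℕ × ℕ → ℝ := fun q => s q.1 * s q.2 with hF
  have hFpos : ∀ q, 0 ≤ F q := fun q => mul_nonneg (hpos _) (hpos _)
  have hf : Summable F := hs.mul_of_nonneg hs (fun i => hpos i) (fun i => hpos i)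
  have hf2 : Summable (fun q : ℕ × ℕ => F q ^ 2) := by
    refine (hs2.mul_of_nonneg hs2 (fun i => sq_nonneg _) (fun i => sq_nonneg _)).congr ?_
    intro q; simp [hF, mul_pow]
  set U : Set (ℕ × ℕ) := {q | q.1 < q.2} with hUdef
  set L : Set (ℕ × ℕ) := {q | q.2 < q.1} with hLdef
  set D : Set (ℕ × ℕ) := {q | q.1 = q.2} with hDdef
  have hU : Summable (F ∘ ((↑) : U → ℕ × ℕ)) := hf.subtype U
  have hU2 : Summable ((fun q : ℕ × ℕ => F q ^ 2) ∘ ((↑) : U → ℕ × ℕ)) := hf2.subtype U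
  set B := ∑' q : U, F q with hB
  have hB0 : 0 ≤ B := tsum_nonneg fun q => hFpos _
  -- pair bound
  have hpair : ∀ q : U, F q ≤ A / 2 := by
    rintro ⟨⟨i, j⟩, hij⟩
    have hij' : i ≠ j := Nat.ne_of_lt hij
    have h2 : s i ^ 2 + s j ^ 2 ≤ A := by
      have := Summable.sum_le_tsum ({i, j} : Finset ℕ) (fun k _ => sq_nonneg (s k)) hs2
      rwa [Finset.sum_pair hij'] at this
    have := sq_nonneg (s i - s j)
    simp only [hF]
    nlinarith
  -- P ≤ (A/2) * B
  have step1 : ∑' q : {q : ℕ × ℕ // q.1 < q.2}, (s q.1.1 * s q.1.2) ^ 2 ≤ A / 2 * B := by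
    have hcB : (∑' q : U, A / 2 * F q) = A / 2 * B := tsum_mul_left
    calc ∑' q : {q : ℕ × ℕ // q.1 < q.2}, (s q.1.1 * s q.1.2) ^ 2
        = ∑' q : U, F (↑q) ^ 2 := rfl
      _ ≤ ∑' q : U, A / 2 * F (↑q) := by
          refine Summable.tsum_le_tsum (fun q => ?_) hU2 (hU.mul_left _)
          have h1 := hpair q
          have h2 := hFpos (↑q : ℕ × ℕ)
          nlinarith
      _ = A / 2 * B := hcB
  -- A + 2 B ≤ 1
  have hdecomp : (∑' i, s i) * (∑' i, s i) = B + B + A := by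
    have hT : (∑' i, s i) * (∑' i, s i) = ∑' q : ℕ × ℕ, F q := Summable.tsum_mul_tsum hs hs hf
    have huniv : (Set.univ : Set (ℕ × ℕ)) = (U ∪ L) ∪ D := by
      ext ⟨i, j⟩
      simp only [hUdef, hLdef, hDdef, Set.mem_univ, Set.mem_union, Set.mem_setOf_eq, true_iff]
      omega
    have hdisj1 : Disjoint U L := by
      rw [Set.disjoint_left]; rintro ⟨i, j⟩ h1 h2
      simp only [hUdef, hLdef, Set.mem_setOf_eq] at h1 h2; omega
    have hdisj2 : Disjoint (U ∪ L) D := by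
      rw [Set.disjoint_left]; rintro ⟨i, j⟩ h1 h2
      simp only [hUdef, hLdef, hDdef, Set.mem_union, Set.mem_setOf_eq] at h1 h2; omega
    have hLsum : (∑' q : L, F q) = B := by
      rw [hB, ← Equiv.tsum_eq
        (⟨fun q => ⟨(q.1.2, q.1.1), q.2⟩, fun q => ⟨(q.1.2, q.1.1), q.2⟩,
          fun q => rfl, fun q => rfl⟩ : U ≃ L) (fun q : L => F (↑q))]
      exact tsum_congr fun q => by simp [hF, mul_comm]
    have hDsum : (∑' q : D, F q) = A := by
      rw [hA, ← Equiv.tsum_eq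
        (⟨fun i => ⟨(i, i), rfl⟩, fun q => q.1.1, fun i => rfl,
          fun q => by rcases q with ⟨⟨i, j⟩, h⟩; cases h; rfl⟩ : ℕ ≃ D) (fun q : D => F (↑q))]
      exact tsum_congr fun i => by simp [hF, sq]
    rw [hT, ← tsum_univ F, huniv,
      Summable.tsum_union_disjoint hdisj2 (hf.subtype _) (hf.subtype _),
      Summable.tsum_union_disjoint hdisj1 (hf.subtype _) (hf.subtype _), hLsum, hDsum]
  have hAB : A + 2 * B ≤ 1 := by nlinarith
  calc ∑' q : {q : ℕ × ℕ // q.1 < q.2}, (s q.1.1 * s q.1.2) ^ 2 ≤ A / 2 * B := step1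
    _ ≤ 1 / 16 := by nlinarith [sq_nonneg (A - 2 * B)]


lemma xZero_apply (i : ℕ) :
    (xZero : ∀ _ : ℕ, ℂ) i = if i = 0 then 1/2 else if i = 1 then 1/2 else 0 := by
  rw [xZero]
  rcases i with _ | _ | i <;> simp [lp.single_apply]

end AuxQ

/-- The 4-homogeneous polynomial `Q x = Σ_{i<j} (x i * x j)^2` on
`ℓ_1` has norm `1/16`, and the supremum is attained at `x₀ = (1/2, 1/2, 0, 0, …)`. -/
theorem Qpoly_norm_eq_one_sixteenth :
    (∀ x : lp (fun _ : ℕ => ℂ) 1, ‖x‖ ≤ 1 → ‖Qpoly x‖ ≤ 1 / 16) ∧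
    ‖xZero‖ ≤ 1 ∧
    Qpoly xZero = 1 / 16 ∧
    polyNorm (lp (fun _ : ℕ => ℂ) 1) Qpoly = 1 / 16 := by
  have part1 : ∀ x : lp (fun _ : ℕ => ℂ) 1, ‖x‖ ≤ 1 → ‖Qpoly x‖ ≤ 1 / 16 := by
    intro x hx
    set s : ℕ → ℝ := fun i => ‖x i‖ with hsdef
    have hpos : ∀ i, 0 ≤ s i := fun i => norm_nonneg _
    have hs : Summable s := by
      have h := (lp.memℓp x).summable (p := 1) (by norm_num)
      simpa [Real.rpow_one] using h
    have hnorm : ∑' i, s i ≤ 1 := by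
      have h := lp.norm_eq_tsum_rpow (p := 1) (by norm_num) x
      rw [h] at hx
      simpa [Real.rpow_one] using hx
    have hle : ∀ i, s i ≤ 1 := fun i => (Summable.le_tsum hs i fun j _ => hpos j).trans hnorm
    have hs2 : Summable (fun i => s i ^ 2) :=
      Summable.of_nonneg_of_le (fun i => sq_nonneg _)
        (fun i => by nlinarith [hpos i, hle i]) hs
    have hf2 : Summable (fun q : ℕ × ℕ => (s q.1 * s q.2) ^ 2) := by
      refine (hs2.mul_of_nonneg hs2 (fun i => sq_nonneg _) (fun i => sq_nonneg _)).congr ?_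
      intro q; simp [mul_pow]
    have hsub2 : Summable ((fun q : ℕ × ℕ => (s q.1 * s q.2) ^ 2) ∘
        ((↑) : {q : ℕ × ℕ | q.1 < q.2} → ℕ × ℕ)) := hf2.subtype _
    have hsum : Summable (fun q : {q : ℕ × ℕ // q.1 < q.2} =>
        ‖(x q.1.1 * x q.1.2) ^ 2‖) := by
      refine hsub2.congr fun q => ?_
      simp [Function.comp, norm_pow, hsdef]
    calc ‖Qpoly x‖ ≤ ∑' q : {q : ℕ × ℕ // q.1 < q.2}, ‖(x q.1.1 * x q.1.2) ^ 2‖ := by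
          rw [Qpoly]; exact norm_tsum_le_tsum_norm hsum
      _ = ∑' q : {q : ℕ × ℕ // q.1 < q.2}, (s q.1.1 * s q.1.2) ^ 2 :=
          tsum_congr fun q => by simp [norm_pow, hsdef]
      _ ≤ 1 / 16 := key_sum_bound hpos hs hnorm
  have part2 : ‖xZero‖ ≤ 1 := by
    rw [lp.norm_eq_tsum_rpow (p := 1) (by norm_num) xZero]
    have h2 : ∀ i ∉ Finset.range 2, ‖xZero i‖ ^ ((1 : ℝ≥0∞).toReal) = 0 := by
      intro i hi
      simp only [Finset.mem_range] at hi
      have : xZero i = 0 := by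
        rw [xZero_apply]
        rw [if_neg (by omega), if_neg (by omega)]
      simp [this]
    rw [tsum_eq_sum h2]
    have h0 : xZero 0 = 1/2 := by rw [xZero_apply]; simp
    have h1 : xZero 1 = 1/2 := by rw [xZero_apply]; simp
    norm_num [Finset.sum_range_succ, h0, h1]
  have part3 : Qpoly xZero = 1 / 16 := by
    rw [Qpoly]
    rw [tsum_eq_single (⟨(0, 1), by norm_num⟩ : {q : ℕ × ℕ // q.1 < q.2}) ?_]
    · have h0 : xZero 0 = 1/2 := by rw [xZero_apply]; simp
      have h1 : xZero 1 = 1/2 := by rw [xZero_apply]; simp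
      rw [h0, h1]; norm_num
    · rintro ⟨⟨i, j⟩, hij⟩ hne
      have hzero : xZero i = 0 ∨ xZero j = 0 := by
        rcases Nat.lt_or_ge j 2 with hj | hj
        · exfalso
          apply hne
          have hi0 : i = 0 := by omega
          have hj1 : j = 1 := by omega
          subst hi0; subst hj1; rfl
        · right
          rw [xZero_apply, if_neg (by omega), if_neg (by omega)]
      rcases hzero with h | h <;> simp [h]
  refine ⟨part1, part2, part3, ?_⟩
  have hmem : (1/16 : ℝ) ∈ {r : ℝ | ∃ x : lp (fun _ : ℕ => ℂ) 1, ‖x‖ ≤ 1 ∧ r = ‖Qpoly x‖} := by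
    refine ⟨xZero, part2, ?_⟩
    rw [part3]
    norm_num
  have hub : ∀ r ∈ {r : ℝ | ∃ x : lp (fun _ : ℕ => ℂ) 1, ‖x‖ ≤ 1 ∧ r = ‖Qpoly x‖},
      r ≤ 1/16 := by
    rintro r ⟨x, hx, rfl⟩
    exact part1 x hx
  rw [polyNorm]
  exact le_antisymm (csSup_le ⟨1/16, hmem⟩ hub) (le_csSup ⟨1/16, hub⟩ hmem)

end
end

section
/- Let ω ∈ c₀^⊥ ⊆ (ℓ_∞)' be positive, i.e. ω(x) is real and nonnegative for every x ∈ ℓ_∞ with x(i) ≥ 0 for all i. Then there exists an infinite subset M ⊆ ℕ such that ω(1_M) = 0, where 1_M ∈ ℓ_∞ is the characteristic sequence of M (equal to 1 on M and 0 elsewhere). -/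
open Metric Filter Set Topology ENNReal

noncomputable section

lemma indicatorSeq_apply (M : Set ℕ) (i : ℕ) :
    (indicatorSeq M) i = M.indicator (fun _ => (1 : ℂ)) i := rfl

lemma indicatorSeq_union {A B : Set ℕ} (h : Disjoint A B) :
    indicatorSeq (A ∪ B) = indicatorSeq A + indicatorSeq B := by
  apply lp.ext
  funext i
  rw [lp.coeFn_add]
  show (A ∪ B).indicator (fun _ => (1:ℂ)) i = _
  rw [Set.indicator_union_of_disjoint h]
  rfl

def adFam (r : ℝ) : Set ℕ := Set.range fun n => Nat.pair n ⌊Real.exp r * n⌋₊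

lemma adFam_infinite (r : ℝ) : (adFam r).Infinite :=
  Set.infinite_range_of_injective fun a b hab => (Nat.pair_eq_pair.mp hab).1

lemma adFam_inter_finite {r s : ℝ} (h : r ≠ s) : (adFam r ∩ adFam s).Finite := by
  have hab : Real.exp r ≠ Real.exp s := fun e => h (Real.exp_injective e)
  have habs : 0 < |Real.exp r - Real.exp s| := abs_pos.mpr (sub_ne_zero.mpr hab)
  apply Set.Finite.subset (Set.Finite.image (fun n => Nat.pair n ⌊Real.exp r * n⌋₊)
    (Set.finite_Iio ⌈|Real.exp r - Real.exp s|⁻¹⌉₊))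
  rintro x ⟨⟨n, rfl⟩, ⟨m, hm⟩⟩
  obtain ⟨hnm, hfl⟩ := Nat.pair_eq_pair.mp hm
  subst hnm
  refine ⟨m, ?_, rfl⟩
  rcases Nat.eq_zero_or_pos m with h0 | h0
  · subst h0; exact Nat.ceil_pos.mpr (by positivity)
  have hn0 : (0:ℝ) < m := by exact_mod_cast h0
  have h1 : Real.exp r * m < Real.exp s * m + 1 := by
    calc Real.exp r * m < ⌊Real.exp r * m⌋₊ + 1 := Nat.lt_floor_add_one _
    _ ≤ Real.exp s * m + 1 := by
        rw [← hfl]; exact add_le_add (Nat.floor_le (by positivity)) le_rfl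
  have h2 : Real.exp s * m < Real.exp r * m + 1 := by
    calc Real.exp s * m < ⌊Real.exp s * m⌋₊ + 1 := Nat.lt_floor_add_one _
    _ ≤ Real.exp r * m + 1 := by
        rw [hfl]; exact add_le_add (Nat.floor_le (by positivity)) le_rfl
  have h3 : |Real.exp r - Real.exp s| * m < 1 := by
    rw [← abs_of_nonneg hn0.le, ← abs_mul, sub_mul, abs_sub_lt_iff]
    constructor <;> linarith
  have h4 : (m : ℝ) < |Real.exp r - Real.exp s|⁻¹ := by
    rw [← one_div, lt_div_iff₀ habs, mul_comm]
    exact h3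
  exact Nat.lt_ceil.mpr h4

open ComplexOrder in
/-- Every positive `ω ∈ c₀^⊥ ⊆ (ℓ_∞)'` vanishes on the
characteristic sequence of some infinite subset `M ⊆ ℕ`. -/
theorem exists_infinite_set_annihilated
    (ω : lp (fun _ : ℕ => ℂ) ⊤ →L[ℂ] ℂ)
    (hperp : ∀ y : lp (fun _ : ℕ => ℂ) ⊤, Tendsto (fun i => y i) atTop (𝓝 (0 : ℂ)) → ω y = 0)
    (hpos : ∀ y : lp (fun _ : ℕ => ℂ) ⊤, (∀ i, 0 ≤ y i) → 0 ≤ ω y) :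
    ∃ M : Set ℕ, M.Infinite ∧ ω (indicatorSeq M) = 0 := by
  classical
  set μ : Set ℕ → ℝ := fun A => (ω (indicatorSeq A)).re with hμ
  have hposI : ∀ A : Set ℕ, 0 ≤ ω (indicatorSeq A) := by
    intro A
    apply hpos
    intro i
    rw [indicatorSeq_apply]
    by_cases h : i ∈ A <;> simp [h]
  have hμ0 : ∀ A : Set ℕ, 0 ≤ μ A := fun A => (Complex.le_def.mp (hposI A)).1
  have hfin : ∀ A : Set ℕ, A.Finite → ω (indicatorSeq A) = 0 := by
    intro A hA
    apply hperp
    obtain ⟨n, hn⟩ := hA.bddAbove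
    apply Tendsto.congr' _ tendsto_const_nhds
    filter_upwards [eventually_gt_atTop n] with i hi
    rw [indicatorSeq_apply, Set.indicator_of_notMem]
    exact fun hiA => absurd (hn hiA) (not_le.mpr hi)
  have hadd : ∀ A B : Set ℕ, Disjoint A B → μ (A ∪ B) = μ A + μ B := by
    intro A B hAB
    rw [hμ]
    simp only [indicatorSeq_union hAB, map_add, Complex.add_re]
  have hdiff : ∀ A B : Set ℕ, (A ∩ B).Finite → μ (A \ B) = μ A := by
    intro A B hAB
    have : μ A = μ (A \ B) + μ (A ∩ B) := by
      rw [← hadd _ _ (Set.disjoint_left.mpr fun x hx hx2 => hx.2 hx2.2),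
        Set.diff_union_inter]
    rw [this]
    have : μ (A ∩ B) = 0 := by rw [hμ]; simp [hfin _ hAB]
    rw [this, add_zero]
  have hmono : ∀ A B : Set ℕ, A ⊆ B → μ A ≤ μ B := by
    intro A B hAB
    have : μ B = μ A + μ (B \ A) := by
      rw [← hadd _ _ disjoint_sdiff_right, Set.union_diff_cancel hAB]
    rw [this]
    linarith [hμ0 (B \ A)]
  have key : ∀ S : Finset ℝ, ∑ r ∈ S, μ (adFam r) ≤ μ Set.univ := by
    have key' : ∀ S : Finset ℝ, ∑ r ∈ S, μ (adFam r) ≤ μ (⋃ r ∈ S, adFam r) := by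
      intro S
      induction S using Finset.induction_on with
      | empty => simpa using hμ0 _
      | @insert a S ha ih =>
        have hUfin : (adFam a ∩ ⋃ r ∈ S, adFam r).Finite := by
          rw [Set.inter_iUnion₂]
          exact Set.Finite.biUnion S.finite_toSet fun r hr =>
            adFam_inter_finite (fun e => ha (e ▸ hr))
        have hsplit : μ (⋃ r ∈ insert a S, adFam r)
            = μ (adFam a) + μ (⋃ r ∈ S, adFam r) := by
          rw [Finset.set_biUnion_insert, ← Set.diff_union_self,
            hadd _ _ disjoint_sdiff_left, hdiff _ _ hUfin]
        rw [Finset.sum_insert ha, hsplit]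
        linarith [ih]
    exact fun S => (key' S).trans (hmono _ _ (Set.subset_univ _))
  have hcnt : {r : ℝ | μ (adFam r) ≠ 0}.Countable := by
    have hsub : {r : ℝ | μ (adFam r) ≠ 0} ⊆
        ⋃ n : ℕ, {r : ℝ | 1 / (n + 1) < μ (adFam r)} := by
      intro r hr
      have hpos' : 0 < μ (adFam r) := lt_of_le_of_ne (hμ0 _) (Ne.symm hr)
      obtain ⟨n, hn⟩ := exists_nat_one_div_lt hpos'
      exact Set.mem_iUnion.mpr ⟨n, hn⟩
    apply Set.Countable.mono hsub
    apply Set.countable_iUnion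
    intro n
    apply Set.Finite.countable
    by_contra hinf
    obtain ⟨t, hts, htf, htc⟩ :=
      Set.Infinite.exists_subset_ncard_eq hinf (⌈μ Set.univ * (n + 1)⌉₊ + 1)
    have hsum : (⌈μ Set.univ * (n + 1)⌉₊ + 1 : ℝ) * (1 / (n + 1))
        ≤ ∑ r ∈ htf.toFinset, μ (adFam r) := by
      have : ∀ r ∈ htf.toFinset, 1 / ((n : ℝ) + 1) ≤ μ (adFam r) := by
        intro r hr
        exact le_of_lt (hts (htf.mem_toFinset.mp hr))
      calc (⌈μ Set.univ * (n + 1)⌉₊ + 1 : ℝ) * (1 / (n + 1))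
          = htf.toFinset.card * (1 / ((n:ℝ) + 1)) := by
            rw [← Set.ncard_eq_toFinset_card t htf, htc]; push_cast; ring
        _ ≤ ∑ r ∈ htf.toFinset, μ (adFam r) := by
            have h5 := Finset.card_nsmul_le_sum htf.toFinset
              (fun r => μ (adFam r)) (1 / ((n:ℝ) + 1)) this
            simpa [nsmul_eq_mul] using h5
    have hle := key htf.toFinset
    have hceil : μ Set.univ * (n + 1) < (⌈μ Set.univ * (n + 1)⌉₊ + 1 : ℝ) :=
      lt_of_le_of_lt (Nat.le_ceil _) (by linarith)
    have hn1 : (0:ℝ) < (n:ℝ) + 1 := by positivity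
    have h6 : ((⌈μ Set.univ * (n + 1)⌉₊ : ℝ) + 1) ≤ μ Set.univ * (n + 1) := by
      have h7 := hsum.trans hle
      rw [mul_one_div, div_le_iff₀ hn1] at h7
      linarith
    linarith
  have : ∃ r : ℝ, μ (adFam r) = 0 := by
    by_contra hc
    push_neg at hc
    have : (Set.univ : Set ℝ).Countable := by
      have : (Set.univ : Set ℝ) ⊆ {r : ℝ | μ (adFam r) ≠ 0} := fun r _ => hc r
      exact Set.Countable.mono this hcnt
    exact Cardinal.not_countable_real this
  obtain ⟨r, hr⟩ := this
  refine ⟨adFam r, adFam_infinite r, ?_⟩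
  have him := (Complex.le_def.mp (hposI (adFam r))).2
  apply Complex.ext
  · rw [Complex.zero_re]; exact hr
  · simpa using him.symm

end
end
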